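/- arXiv:1404.4420 — 2 statements merged into one kernel-verified Lean document; each statement's English description precedes it below -/
import Mathlib

section
/- Let A ∈ M_N(ℂ) and γ > 0, and set Z = 𝟏_N + iγA. Then Σ_{k=2}^N |σ_k(Z) − σ_k(γA)| ≤ 2γ‖A‖. -/
open Matrix

/-- The decreasingly ordered eigenvalues of the Hermitian matrix `A * Aᴴ`. -/
noncomputable def evalsDesc {N : ℕ} (A : Matrix (Fin N) (Fin N) ℂ) : Fin N → ℝ :=
  fun k =>
    (Matrix.isHermitian_mul_conjTranspose_self A).eigenvalues
      (Tuple.sort (fun i => -(Matrix.isHermitian_mul_conjTranspose_self A).eigenvalues i) k)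

/-- The decreasingly ordered singular values `σ_1(A) ≥ ⋯ ≥ σ_N(A)` of a complex matrix `A`,
i.e. the decreasingly ordered nonnegative square roots of the eigenvalues of `A * Aᴴ`.
Here `svalsDesc A k` is `σ_{k+1}(A)` (indices are 0-based). -/
noncomputable def svalsDesc {N : ℕ} (A : Matrix (Fin N) (Fin N) ℂ) : Fin N → ℝ :=
  fun k => Real.sqrt (evalsDesc A k)

/-- The operator norm (largest singular value) of a complex matrix, realized as the norm of
the induced linear operator on Euclidean space. -/
noncomputable def opNorm {m n : ℕ} (A : Matrix (Fin m) (Fin n) ℂ) : ℝ :=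
  ‖LinearMap.toContinuousLinearMap (Matrix.toEuclideanLin A)‖

/-- The entrywise exponential of a complex matrix. -/
noncomputable def entrywiseExp {m n : ℕ} (A : Matrix (Fin m) (Fin n) ℂ) :
    Matrix (Fin m) (Fin n) ℂ :=
  Matrix.of fun k l => Complex.exp (A k l)

/-- The `N × N` all-ones matrix. -/
def allOnes (N : ℕ) : Matrix (Fin N) (Fin N) ℂ :=
  Matrix.of fun _ _ => (1 : ℂ)

section Aux

open Finset Submodule

variable {N : ℕ}

local notation "E" => EuclideanSpace ℂ (Fin N)

lemma toEuclideanLin_eigen (H : Matrix (Fin N) (Fin N) ℂ) (hH : H.IsHermitian) (j : Fin N) :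
    Matrix.toEuclideanLin H (hH.eigenvectorBasis j) = (hH.eigenvalues j : ℂ) • (hH.eigenvectorBasis j) := by
  have h := hH.mulVec_eigenvectorBasis j
  rw [RCLike.real_smul_eq_coe_smul (K := ℂ)] at h
  apply (WithLp.equiv 2 _).injective
  simp only [Matrix.toEuclideanLin_apply, Equiv.apply_symm_apply, WithLp.equiv_apply, WithLp.ofLp_smul]
  exact h

lemma quadform_eq_sum (H : Matrix (Fin N) (Fin N) ℂ) (hH : H.IsHermitian) (x : E) :
    (inner ℂ x (Matrix.toEuclideanLin H x) : ℂ).re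
      = ∑ j, hH.eigenvalues j * ‖hH.eigenvectorBasis.repr x j‖ ^ 2 := by
  set e := hH.eigenvectorBasis
  have hx : x = ∑ j, e.repr x j • e j := (e.sum_repr x).symm
  have h1 : Matrix.toEuclideanLin H x = ∑ j, (e.repr x j * hH.eigenvalues j) • e j := by
    conv_lhs => rw [hx]
    rw [map_sum]
    refine Finset.sum_congr rfl fun j _ => ?_
    rw [_root_.map_smul, toEuclideanLin_eigen H hH j, smul_smul]
  rw [h1, inner_sum]
  rw [Complex.re_sum]
  refine Finset.sum_congr rfl fun j _ => ?_
  rw [inner_smul_right]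
  have h2 : (inner ℂ x (e j) : ℂ) = starRingEnd ℂ (e.repr x j) := by
    rw [← inner_conj_symm, OrthonormalBasis.repr_apply_apply]
  rw [h2]
  have : e.repr x j * (hH.eigenvalues j : ℂ) * starRingEnd ℂ (e.repr x j)
      = (hH.eigenvalues j : ℂ) * (e.repr x j * starRingEnd ℂ (e.repr x j)) := by ring
  rw [this, Complex.mul_conj']
  simp [← Complex.ofReal_pow]

lemma norm_sq_eq_sum_repr (x : E) (b : OrthonormalBasis (Fin N) ℂ E) :
    ‖x‖ ^ 2 = ∑ j, ‖b.repr x j‖ ^ 2 := by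
  rw [← b.repr.norm_map x, EuclideanSpace.norm_eq, Real.sq_sqrt (by positivity)]

lemma quadform_eq_norm_sq (M : Matrix (Fin N) (Fin N) ℂ) (x : E) :
    (inner ℂ x (Matrix.toEuclideanLin (M * Mᴴ) x) : ℂ).re = ‖Matrix.toEuclideanLin Mᴴ x‖ ^ 2 := by
  have h : Matrix.toEuclideanLin (M * Mᴴ) x = Matrix.toEuclideanLin M (Matrix.toEuclideanLin Mᴴ x) := by
    simp [Matrix.toEuclideanLin_apply, mulVec_mulVec]
  rw [h]
  have h2 : (inner ℂ x (Matrix.toEuclideanLin M (Matrix.toEuclideanLin Mᴴ x)) : ℂ)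
      = inner ℂ (Matrix.toEuclideanLin Mᴴ x) (Matrix.toEuclideanLin Mᴴ x) := by
    rw [Matrix.toEuclideanLin_conjTranspose_eq_adjoint]
    exact (LinearMap.adjoint_inner_left _ _ _).symm
  rw [h2, inner_self_eq_norm_sq_to_K]
  simp [← Complex.ofReal_pow]

lemma repr_eq_zero_of_mem_span (b : OrthonormalBasis (Fin N) ℂ E) (S : Finset (Fin N))
    {x : E} (hx : x ∈ Submodule.span ℂ (b '' S)) {i : Fin N} (hi : i ∉ S) :
    b.repr x i = 0 := by
  have hsub : ((b.toBasis.repr x).support : Set (Fin N)) ⊆ S := by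
    rw [← Module.Basis.mem_span_image]
    simpa [OrthonormalBasis.coe_toBasis] using hx
  by_contra h
  have hmem : i ∈ (b.toBasis.repr x).support := by
    simp [Finsupp.mem_support_iff, OrthonormalBasis.coe_toBasis_repr_apply, h]
  exact hi (hsub hmem)

lemma finrank_span_onb (b : OrthonormalBasis (Fin N) ℂ E) (S : Finset (Fin N)) :
    Module.finrank ℂ (Submodule.span ℂ (⇑b '' ↑S)) = S.card := by
  classical
  have hinj : Function.Injective ⇑b := by
    have := b.toBasis.injective
    simpa [OrthonormalBasis.coe_toBasis] using this
  have h1 : (⇑b '' ↑S) = ↑(S.image ⇑b) := by simp [Finset.coe_image]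
  rw [h1, finrank_span_finset_eq_card, Finset.card_image_of_injective _ hinj]
  · have hli : LinearIndepOn ℂ id (Set.range ⇑b) := by
      have := (linearIndepOn_id_range_iff hinj).mpr (by simpa [OrthonormalBasis.coe_toBasis] using b.toBasis.linearIndependent)
      simpa [OrthonormalBasis.coe_toBasis] using this
    refine hli.mono ?_
    intro x hx
    obtain ⟨i, -, rfl⟩ := Finset.mem_image.mp hx
    exact ⟨i, rfl⟩

lemma quadform_le_on_span (H : Matrix (Fin N) (Fin N) ℂ) (hH : H.IsHermitian)
    (S : Finset (Fin N)) (c : ℝ) (hc : ∀ i ∈ S, hH.eigenvalues i ≤ c)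
    {x : E} (hx : x ∈ Submodule.span ℂ (⇑hH.eigenvectorBasis '' ↑S)) :
    (inner ℂ x (Matrix.toEuclideanLin H x) : ℂ).re ≤ c * ‖x‖ ^ 2 := by
  rw [quadform_eq_sum H hH x, norm_sq_eq_sum_repr x hH.eigenvectorBasis, Finset.mul_sum]
  refine Finset.sum_le_sum fun j _ => ?_
  by_cases hj : j ∈ S
  · exact mul_le_mul_of_nonneg_right (hc j hj) (by positivity)
  · rw [repr_eq_zero_of_mem_span _ S hx hj]
    simp

lemma quadform_ge_on_span (H : Matrix (Fin N) (Fin N) ℂ) (hH : H.IsHermitian)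
    (S : Finset (Fin N)) (c : ℝ) (hc : ∀ i ∈ S, c ≤ hH.eigenvalues i)
    {x : E} (hx : x ∈ Submodule.span ℂ (⇑hH.eigenvectorBasis '' ↑S)) :
    c * ‖x‖ ^ 2 ≤ (inner ℂ x (Matrix.toEuclideanLin H x) : ℂ).re := by
  rw [quadform_eq_sum H hH x, norm_sq_eq_sum_repr x hH.eigenvectorBasis, Finset.mul_sum]
  refine Finset.sum_le_sum fun j _ => ?_
  by_cases hj : j ∈ S
  · exact mul_le_mul_of_nonneg_right (hc j hj) (by positivity)
  · rw [repr_eq_zero_of_mem_span _ S hx hj]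
    simp

lemma evalsDesc_antitone (A : Matrix (Fin N) (Fin N) ℂ) : Antitone (evalsDesc A) := by
  intro i j hij
  have := Tuple.monotone_sort
    (fun i => -(Matrix.isHermitian_mul_conjTranspose_self A).eigenvalues i) hij
  simp only [Function.comp_apply] at this
  simpa [evalsDesc] using this

lemma evalsDesc_nonneg (A : Matrix (Fin N) (Fin N) ℂ) (k : Fin N) : 0 ≤ evalsDesc A k :=
  Matrix.eigenvalues_self_mul_conjTranspose_nonneg A _

lemma svalsDesc_nonneg (A : Matrix (Fin N) (Fin N) ℂ) (k : Fin N) : 0 ≤ svalsDesc A k :=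
  Real.sqrt_nonneg _

lemma svalsDesc_antitone (A : Matrix (Fin N) (Fin N) ℂ) : Antitone (svalsDesc A) :=
  fun _ _ hij => Real.sqrt_le_sqrt (evalsDesc_antitone A hij)

lemma sval_ge_of_subspace (M : Matrix (Fin N) (Fin N) ℂ) (k : Fin N)
    (W : Submodule ℂ E) (hW : (k : ℕ) + 1 ≤ Module.finrank ℂ W)
    (c : ℝ) (hc : 0 ≤ c)
    (hbound : ∀ x ∈ W, c * ‖x‖ ≤ ‖Matrix.toEuclideanLin Mᴴ x‖) :
    c ≤ svalsDesc M k := by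
  classical
  set hH := Matrix.isHermitian_mul_conjTranspose_self M with hHdef
  set σ := Tuple.sort (fun i => -(hH.eigenvalues i)) with hσdef
  set S : Finset (Fin N) := (Finset.Ici k).image σ with hSdef
  have hScard : S.card = N - (k : ℕ) := by
    rw [Finset.card_image_of_injective _ σ.injective, Fin.card_Ici]
  set U := Submodule.span ℂ (⇑hH.eigenvectorBasis '' ↑S) with hUdef
  have hUrank : Module.finrank ℂ U = N - (k : ℕ) := by
    rw [hUdef, finrank_span_onb]; exact hScard
  have hnd : ¬ Disjoint W U := by
    intro hdis
    have hle := Submodule.finrank_add_finrank_le_of_disjoint hdis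
    rw [hUrank, finrank_euclideanSpace_fin] at hle
    omega
  rw [disjoint_iff] at hnd
  obtain ⟨x, hxmem, hx0⟩ := Submodule.exists_mem_ne_zero_of_ne_bot hnd
  obtain ⟨hxW, hxU⟩ := Submodule.mem_inf.mp hxmem
  have hxnorm : (0:ℝ) < ‖x‖ := norm_pos_iff.mpr hx0
  have h1 : c * ‖x‖ ≤ ‖Matrix.toEuclideanLin Mᴴ x‖ := hbound x hxW
  have h2 : ‖Matrix.toEuclideanLin Mᴴ x‖ ^ 2 ≤ evalsDesc M k * ‖x‖ ^ 2 := by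
    rw [← quadform_eq_norm_sq M x]
    refine quadform_le_on_span (M * Mᴴ) hH S (evalsDesc M k) ?_ hxU
    intro i hi
    obtain ⟨j, hj, rfl⟩ := Finset.mem_image.mp hi
    have : evalsDesc M j ≤ evalsDesc M k := evalsDesc_antitone M (Finset.mem_Ici.mp hj)
    simpa [evalsDesc] using this
  have h3 : c ^ 2 * ‖x‖ ^ 2 ≤ evalsDesc M k * ‖x‖ ^ 2 := by
    calc c ^ 2 * ‖x‖ ^ 2 = (c * ‖x‖) ^ 2 := by ring
    _ ≤ ‖Matrix.toEuclideanLin Mᴴ x‖ ^ 2 := by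
        apply pow_le_pow_left₀ (by positivity) h1
    _ ≤ evalsDesc M k * ‖x‖ ^ 2 := h2
  have h4 : c ^ 2 ≤ evalsDesc M k := le_of_mul_le_mul_right h3 (by positivity)
  have := Real.sqrt_le_sqrt h4
  rwa [Real.sqrt_sq hc] at this

lemma exists_subspace_sval (M : Matrix (Fin N) (Fin N) ℂ) (k : Fin N) :
    ∃ V : Submodule ℂ E, Module.finrank ℂ V = (k : ℕ) + 1 ∧
      ∀ x ∈ V, svalsDesc M k * ‖x‖ ≤ ‖Matrix.toEuclideanLin Mᴴ x‖ := by
  classical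
  set hH := Matrix.isHermitian_mul_conjTranspose_self M with hHdef
  set σ := Tuple.sort (fun i => -(hH.eigenvalues i)) with hσdef
  set S : Finset (Fin N) := (Finset.Iic k).image σ with hSdef
  have hScard : S.card = (k : ℕ) + 1 := by
    rw [Finset.card_image_of_injective _ σ.injective, Fin.card_Iic]
  refine ⟨Submodule.span ℂ (⇑hH.eigenvectorBasis '' ↑S), by rw [finrank_span_onb]; exact hScard, ?_⟩
  intro x hx
  have h2 : evalsDesc M k * ‖x‖ ^ 2 ≤ ‖Matrix.toEuclideanLin Mᴴ x‖ ^ 2 := by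
    rw [← quadform_eq_norm_sq M x]
    refine quadform_ge_on_span (M * Mᴴ) hH S (evalsDesc M k) ?_ hx
    intro i hi
    obtain ⟨j, hj, rfl⟩ := Finset.mem_image.mp hi
    have : evalsDesc M k ≤ evalsDesc M j := evalsDesc_antitone M (Finset.mem_Iic.mp hj)
    simpa [evalsDesc] using this
  have : Real.sqrt (evalsDesc M k * ‖x‖ ^ 2) ≤ Real.sqrt (‖Matrix.toEuclideanLin Mᴴ x‖ ^ 2) :=
    Real.sqrt_le_sqrt h2
  rwa [Real.sqrt_mul (evalsDesc_nonneg M k), Real.sqrt_sq (norm_nonneg x),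
    Real.sqrt_sq (norm_nonneg _)] at this

lemma svalsDesc_interlace (M P : Matrix (Fin N) (Fin N) ℂ)
    (hP : N - 1 ≤ Module.finrank ℂ (LinearMap.ker (Matrix.toEuclideanLin Pᴴ)))
    (k : ℕ) (hk : k + 1 < N) :
    svalsDesc (M + P) ⟨k + 1, hk⟩ ≤ svalsDesc M ⟨k, Nat.lt_of_succ_lt hk⟩ := by
  obtain ⟨V, hVrank, hVbound⟩ := exists_subspace_sval (M + P) ⟨k + 1, hk⟩
  set K := LinearMap.ker (Matrix.toEuclideanLin Pᴴ)
  set W := V ⊓ K with hWdef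
  have hWrank : k + 1 ≤ Module.finrank ℂ W := by
    have hN : 1 ≤ N := Nat.one_le_of_lt hk
    rw [hWdef]
    have h := Submodule.finrank_sup_add_finrank_inf_eq V K
    have hVrank' : Module.finrank ℂ V = k + 2 := by simpa using hVrank
    have h2 : Module.finrank ℂ (V ⊔ K : Submodule ℂ E) ≤ N := by
      have := Submodule.finrank_le (V ⊔ K : Submodule ℂ E)
      rwa [finrank_euclideanSpace_fin] at this
    omega
  refine sval_ge_of_subspace M ⟨k, Nat.lt_of_succ_lt hk⟩ W hWrank _ (Real.sqrt_nonneg _) ?_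
  intro x hx
  obtain ⟨hxV, hxK⟩ := Submodule.mem_inf.mp hx
  have hPx : Matrix.toEuclideanLin Pᴴ x = 0 := hxK
  have : Matrix.toEuclideanLin (M + P)ᴴ x = Matrix.toEuclideanLin Mᴴ x := by
    rw [conjTranspose_add, map_add, LinearMap.add_apply, hPx, add_zero]
  have hb := hVbound x hxV
  rwa [this] at hb

lemma ker_allOnes_smul (c : ℂ) :
    N - 1 ≤ Module.finrank ℂ (LinearMap.ker (Matrix.toEuclideanLin ((c • allOnes N)ᴴ))) := by
  classical
  set ℓ : E →ₗ[ℂ] ℂ :=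
    { toFun := fun x => ∑ i, x i
      map_add' := by intro x y; simp [Finset.sum_add_distrib]
      map_smul' := by intro c x; simp [Finset.mul_sum] }
  have hle : LinearMap.ker ℓ ≤ LinearMap.ker (Matrix.toEuclideanLin ((c • allOnes N)ᴴ)) := by
    intro x hx
    have hx' : ∑ i, x i = 0 := hx
    rw [LinearMap.mem_ker]
    apply (WithLp.equiv 2 _).injective
    simp only [Matrix.toEuclideanLin_apply, Equiv.apply_symm_apply]
    funext j
    simp [allOnes, mulVec, dotProduct, conjTranspose_smul, Matrix.conjTranspose,
      Finset.mul_sum, ← Finset.sum_mul]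
    rw [← Finset.mul_sum, hx', mul_zero]
  have h1 : N - 1 ≤ Module.finrank ℂ (LinearMap.ker ℓ) := by
    have h2 := LinearMap.finrank_range_add_finrank_ker ℓ
    have h3 : Module.finrank ℂ (LinearMap.range ℓ) ≤ 1 := by
      have := Submodule.finrank_le (LinearMap.range ℓ)
      simpa using this
    rw [finrank_euclideanSpace_fin] at h2
    omega
  exact le_trans h1 (Submodule.finrank_mono hle)

lemma toEuclideanLin_le_opNorm (M : Matrix (Fin N) (Fin N) ℂ) (y : E) :
    ‖Matrix.toEuclideanLin M y‖ ≤ opNorm M * ‖y‖ :=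
  (LinearMap.toContinuousLinearMap (Matrix.toEuclideanLin M)).le_opNorm y

lemma sval_le_opNorm (M : Matrix (Fin N) (Fin N) ℂ) (k : Fin N) :
    svalsDesc M k ≤ opNorm M := by
  set hH := Matrix.isHermitian_mul_conjTranspose_self M with hHdef
  set i := Tuple.sort (fun i => -(hH.eigenvalues i)) k with hidef
  have hsv : svalsDesc M k = Real.sqrt (hH.eigenvalues i) := rfl
  set u := hH.eigenvectorBasis i with hudef
  have hu1 : ‖u‖ = 1 := hH.eigenvectorBasis.orthonormal.1 i
  have hq : (inner ℂ u (Matrix.toEuclideanLin (M * Mᴴ) u) : ℂ).re = hH.eigenvalues i := by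
    rw [toEuclideanLin_eigen (M * Mᴴ) hH i, inner_smul_right, inner_self_eq_norm_sq_to_K, hu1]
    simp
  have hnorm : ‖Matrix.toEuclideanLin Mᴴ u‖ ^ 2 = hH.eigenvalues i := by
    rw [← quadform_eq_norm_sq M u, hq]
  set t := ‖Matrix.toEuclideanLin Mᴴ u‖ with htdef
  have habs : hH.eigenvalues i ≤ opNorm M * t := by
    rw [← hq]
    have h1 : (inner ℂ u (Matrix.toEuclideanLin (M * Mᴴ) u) : ℂ).re
        ≤ ‖(inner ℂ u (Matrix.toEuclideanLin (M * Mᴴ) u) : ℂ)‖ := Complex.re_le_norm _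
    refine le_trans h1 ?_
    have h2 : Matrix.toEuclideanLin (M * Mᴴ) u
        = Matrix.toEuclideanLin M (Matrix.toEuclideanLin Mᴴ u) := by
      simp [Matrix.toEuclideanLin_apply, mulVec_mulVec]
    rw [h2]
    calc ‖(inner ℂ u (Matrix.toEuclideanLin M (Matrix.toEuclideanLin Mᴴ u)) : ℂ)‖
        ≤ ‖u‖ * ‖Matrix.toEuclideanLin M (Matrix.toEuclideanLin Mᴴ u)‖ := norm_inner_le_norm _ _
      _ = ‖Matrix.toEuclideanLin M (Matrix.toEuclideanLin Mᴴ u)‖ := by rw [hu1, one_mul]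
      _ ≤ opNorm M * t := toEuclideanLin_le_opNorm M _
  rw [hsv, ← hnorm, Real.sqrt_sq (norm_nonneg _)]
  rcases eq_or_lt_of_le (norm_nonneg (Matrix.toEuclideanLin Mᴴ u)) with h | h
  · rw [← h]
    exact norm_nonneg _
  · have : t * t ≤ opNorm M * t := by rw [← sq]; rw [hnorm]; exact habs
    exact le_of_mul_le_mul_right this h

lemma eigenvalues_congr {A B : Matrix (Fin N) (Fin N) ℂ} (h : A = B)
    (hA : A.IsHermitian) (hB : B.IsHermitian) : hA.eigenvalues = hB.eigenvalues := by
  subst h; rfl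

lemma svalsDesc_congr (M₁ M₂ : Matrix (Fin N) (Fin N) ℂ) (h : M₁ * M₁ᴴ = M₂ * M₂ᴴ) :
    svalsDesc M₁ = svalsDesc M₂ := by
  have he := eigenvalues_congr h (Matrix.isHermitian_mul_conjTranspose_self M₁)
    (Matrix.isHermitian_mul_conjTranspose_self M₂)
  funext k
  simp only [svalsDesc, evalsDesc, he]

set_option synthInstance.maxHeartbeats 400000 in
lemma opNorm_coe_smul (γ : ℝ) (hγ : 0 ≤ γ) (A : Matrix (Fin N) (Fin N) ℂ) :
    opNorm ((γ : ℂ) • A) = γ * opNorm A := by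
  unfold opNorm
  rw [_root_.map_smul, _root_.map_smul, norm_smul (γ : ℂ)
    (LinearMap.toContinuousLinearMap (toEuclideanLin A))]
  simp [abs_of_nonneg hγ]

end Aux

set_option maxHeartbeats 1000000 in
/-- for `A ∈ M_N(ℂ)` and `γ > 0`, with `Z = 𝟏_N + iγA`,
`Σ_{k=2}^N |σ_k(Z) − σ_k(γA)| ≤ 2γ‖A‖`.  (The sum runs over all indices except the
first, i.e. over 0-based indices `k` with `0 < k`.) -/
theorem sum_abs_svals_tail_linearization {N : ℕ}
    (A : Matrix (Fin N) (Fin N) ℂ) (γ : ℝ) (hγ0 : 0 < γ) :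
    ∑ k ∈ Finset.univ.filter (fun k : Fin N => 0 < (k : ℕ)),
        |svalsDesc (allOnes N + (Complex.I * (γ : ℂ)) • A) k - svalsDesc ((γ : ℂ) • A) k|
      ≤ 2 * γ * opNorm A := by
  classical
  have hopA : 0 ≤ opNorm A := norm_nonneg _
  rcases Nat.eq_zero_or_pos N with hN0 | hNpos
  · subst hN0
    rw [Finset.sum_eq_zero (fun k _ => (Fin.elim0 k))]
    positivity
  set X := (Complex.I * (γ : ℂ)) • A with hX
  have hax : svalsDesc X = svalsDesc ((γ : ℂ) • A) := by
    refine svalsDesc_congr _ _ ?_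
    rw [conjTranspose_smul, conjTranspose_smul, smul_mul_assoc, mul_smul_comm,
      smul_mul_assoc, mul_smul_comm, smul_smul, smul_smul]
    congr 1
    simp [Complex.ext_iff]
  set a : Fin N → ℝ := svalsDesc ((γ : ℂ) • A) with ha
  set b : Fin N → ℝ := svalsDesc (allOnes N + X) with hb
  have hker1 : N - 1 ≤ Module.finrank ℂ (LinearMap.ker (Matrix.toEuclideanLin (allOnes N)ᴴ)) := by
    have := ker_allOnes_smul (N := N) 1
    rwa [one_smul] at this
  have hba : ∀ (k : ℕ) (hk : k + 1 < N), b ⟨k + 1, hk⟩ ≤ a ⟨k, Nat.lt_of_succ_lt hk⟩ := by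
    intro k hk
    have h2 := svalsDesc_interlace X (allOnes N) hker1 k hk
    rw [hax] at h2
    calc b ⟨k + 1, hk⟩ = svalsDesc (X + allOnes N) ⟨k + 1, hk⟩ := by rw [hb, add_comm]
      _ ≤ a ⟨k, Nat.lt_of_succ_lt hk⟩ := h2
  have hab : ∀ (k : ℕ) (hk : k + 1 < N), a ⟨k + 1, hk⟩ ≤ b ⟨k, Nat.lt_of_succ_lt hk⟩ := by
    intro k hk
    have h2 := svalsDesc_interlace (allOnes N + X) ((-1 : ℂ) • allOnes N)
      (ker_allOnes_smul (-1)) k hk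
    have h3 : allOnes N + X + (-1 : ℂ) • allOnes N = X := by
      rw [neg_one_smul]
      abel
    rw [h3, hax] at h2
    exact h2
  set m : Fin N → ℝ := fun k => min (a k) (b k) with hm
  have hm_nonneg : ∀ k, 0 ≤ m k := fun k => le_min (svalsDesc_nonneg _ k) (svalsDesc_nonneg _ k)
  -- the pointwise bound
  have key : ∀ k : Fin N, 0 < (k : ℕ) → |b k - a k| ≤ m ⟨(k : ℕ) - 1, by omega⟩ - m k := by
    intro k hpos
    · set p : Fin N := ⟨(k : ℕ) - 1, by omega⟩ with hp
      have hkp : k = ⟨((k : ℕ) - 1) + 1, by omega⟩ := Fin.ext (by simp; omega)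
      have h1 : b k ≤ a p := by rw [hkp]; exact hba _ _
      have h2 : a k ≤ b p := by rw [hkp]; exact hab _ _
      have h3 : a k ≤ a p := svalsDesc_antitone _ (by rw [hkp]; exact Fin.mk_le_mk.mpr (by omega))
      have h4 : b k ≤ b p := svalsDesc_antitone _ (by rw [hkp]; exact Fin.mk_le_mk.mpr (by omega))
      have hminp : a k ≤ m p ∧ b k ≤ m p := ⟨le_min h3 h2, le_min h1 h4⟩
      have hmk1 : m k ≤ a k := min_le_left _ _
      have hmk2 : m k ≤ b k := min_le_right _ _
      rw [abs_sub_le_iff]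
      constructor <;> [skip; skip] <;> · simp only [hm] at *; cases hminp; linarith
  calc ∑ k ∈ Finset.univ.filter (fun k : Fin N => 0 < (k : ℕ)), |b k - a k|
      ≤ ∑ k ∈ Finset.univ.filter (fun k : Fin N => 0 < (k : ℕ)),
          (m ⟨(k : ℕ) - 1, by omega⟩ - m k) := by
        refine Finset.sum_le_sum (fun k hk => key k ?_)
        simpa using (Finset.mem_filter.mp hk).2
    _ = ∑ k : Fin N, (m ⟨(k : ℕ) - 1, by omega⟩ - m k) := by
        rw [Finset.sum_filter]
        refine Finset.sum_congr rfl fun k _ => ?_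
        rcases Nat.eq_zero_or_pos (k : ℕ) with h0 | hpos
        · have h1 : (⟨(k : ℕ) - 1, by omega⟩ : Fin N) = k := Fin.ext (by simp [h0])
          rw [if_neg (by omega), h1, sub_self]
        · rw [if_pos hpos]
    _ = ∑ j ∈ Finset.range N,
          ((fun t : ℕ => m ⟨min (t - 1) (N - 1), by omega⟩) j
            - (fun t : ℕ => m ⟨min (t - 1) (N - 1), by omega⟩) (j + 1)) := by
        rw [← Fin.sum_univ_eq_sum_range]
        refine Finset.sum_congr rfl fun k _ => ?_
        have e1 : (⟨min ((k : ℕ) - 1) (N - 1), by omega⟩ : Fin N)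
            = ⟨(k : ℕ) - 1, by omega⟩ := Fin.ext (by simp; omega)
        have e2 : (⟨min ((k : ℕ) + 1 - 1) (N - 1), by omega⟩ : Fin N) = k :=
          Fin.ext (by simp; omega)
        dsimp only
        rw [e1, e2]
    _ = m ⟨min (0 - 1) (N - 1), by omega⟩ - m ⟨min (N - 1) (N - 1), by omega⟩ := by
        rw [Finset.sum_range_sub' (fun t : ℕ => m ⟨min (t - 1) (N - 1), by omega⟩) N]
    _ ≤ m ⟨min (0 - 1) (N - 1), by omega⟩ := by
        have := hm_nonneg ⟨min (N - 1) (N - 1), by omega⟩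
        linarith
    _ ≤ a ⟨min (0 - 1) (N - 1), by omega⟩ := min_le_left _ _
    _ ≤ opNorm ((γ : ℂ) • A) := sval_le_opNorm _ _
    _ = γ * opNorm A := opNorm_coe_smul γ hγ0.le A
    _ ≤ 2 * γ * opNorm A := by nlinarith
end

section
/- Let A ∈ M_N(ℂ) and 0 < γ < 1, and set X = exp_∘(iγA). Then the largest singular value of X/γ satisfies | σ_1(X/γ) / (N/γ) − 1 | ≤ γ ( γ exp(‖A‖) + ‖A‖ ). -/
open Matrix

/- ### Auxiliary lemmas -/

open scoped Matrix.Norms.L2Operator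
open Nat

set_option maxHeartbeats 1000000

lemma aux_opNorm_eq_norm {m n : ℕ} (A : Matrix (Fin m) (Fin n) ℂ) : opNorm A = ‖A‖ := rfl

lemma aux_entry_le_norm {N : ℕ} (B : Matrix (Fin N) (Fin N) ℂ) (k l : Fin N) :
    ‖B k l‖ ≤ ‖B‖ := by
  have h := B.l2_opNorm_mulVec (EuclideanSpace.single l 1)
  rw [EuclideanSpace.norm_single, norm_one, mul_one] at h
  set y := (EuclideanSpace.equiv (Fin N) ℂ).symm (B *ᵥ (EuclideanSpace.single l 1)) with hy
  have hyk : y k = B k l := by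
    show (B *ᵥ (EuclideanSpace.single l 1)) k = B k l
    simp [Matrix.mulVec, dotProduct, EuclideanSpace.single_apply]
  have h2 : ‖B k l‖ ≤ ‖y‖ := by
    rw [EuclideanSpace.norm_eq]
    rw [show ‖B k l‖ = Real.sqrt (‖B k l‖^2) from (Real.sqrt_sq (norm_nonneg _)).symm]
    apply Real.sqrt_le_sqrt
    calc ‖B k l‖^2 = ‖y k‖^2 := by rw [hyk]
    _ ≤ _ := Finset.single_le_sum (f := fun i => ‖y i‖^2) (fun i _ => by positivity)
        (Finset.mem_univ k)
  exact h2.trans h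

lemma aux_norm_le_card_mul_of_entries {N : ℕ} (B : Matrix (Fin N) (Fin N) ℂ) (c : ℝ)
    (hc : 0 ≤ c) (h : ∀ k l, ‖B k l‖ ≤ c) : ‖B‖ ≤ N * c := by
  rw [Matrix.l2_opNorm_def]
  apply ContinuousLinearMap.opNorm_le_bound _ (by positivity)
  intro x
  set w : Fin N → ℂ := B *ᵥ (fun i => x i) with hwdef
  have e : ((Matrix.toEuclideanLin.trans LinearMap.toContinuousLinearMap) B) x
      = (WithLp.equiv 2 (Fin N → ℂ)).symm w := rfl
  rw [e, EuclideanSpace.norm_eq]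
  have hw : ∀ k, w k = ∑ l, B k l * x l := fun k => rfl
  have hS : (∑ l, ‖x l‖) ^ 2 ≤ N * ∑ l, ‖x l‖ ^ 2 := by
    simpa using sq_sum_le_card_mul_sum_sq (s := Finset.univ) (f := fun l => ‖x l‖)
  have hxnorm : ‖x‖ = Real.sqrt (∑ l, ‖x l‖ ^ 2) := EuclideanSpace.norm_eq x
  have key : ∀ k : Fin N, ‖w k‖ ^ 2 ≤ c ^ 2 * (∑ l, ‖x l‖) ^ 2 := by
    intro k
    have h1 : ‖w k‖ ≤ c * ∑ l, ‖x l‖ := by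
      rw [hw k]
      calc ‖∑ l, B k l * x l‖ ≤ ∑ l, ‖B k l * x l‖ := norm_sum_le _ _
        _ ≤ ∑ l, c * ‖x l‖ := Finset.sum_le_sum (fun l _ => by
              rw [norm_mul]; exact mul_le_mul_of_nonneg_right (h k l) (norm_nonneg _))
        _ = c * ∑ l, ‖x l‖ := by rw [Finset.mul_sum]
    calc ‖w k‖ ^ 2 ≤ (c * ∑ l, ‖x l‖) ^ 2 := by
          exact pow_le_pow_left₀ (norm_nonneg _) h1 2
      _ = c ^ 2 * (∑ l, ‖x l‖) ^ 2 := by ring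
  have sum_le : (∑ k, ‖w k‖ ^ 2) ≤ (N * c * ‖x‖) ^ 2 := by
    calc (∑ k, ‖w k‖ ^ 2) ≤ ∑ _k : Fin N, c ^ 2 * (∑ l, ‖x l‖) ^ 2 :=
          Finset.sum_le_sum (fun k _ => key k)
      _ = N * (c ^ 2 * (∑ l, ‖x l‖) ^ 2) := by rw [Finset.sum_const, Finset.card_univ,
            Fintype.card_fin, nsmul_eq_mul]
      _ ≤ N * (c ^ 2 * (N * ∑ l, ‖x l‖ ^ 2)) := by
          apply mul_le_mul_of_nonneg_left _ (Nat.cast_nonneg N)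
          exact mul_le_mul_of_nonneg_left hS (by positivity)
      _ = (N * c) ^ 2 * (∑ l, ‖x l‖ ^ 2) := by ring
      _ = (N * c * ‖x‖) ^ 2 := by
          rw [hxnorm]
          linear_combination ((N:ℝ) * c)^2 *
            (Real.sq_sqrt (by positivity : (0:ℝ) ≤ ∑ l, ‖x l‖ ^ 2)).symm
  calc Real.sqrt (∑ k, ‖w k‖ ^ 2) ≤ Real.sqrt ((N * c * ‖x‖) ^ 2) :=
        Real.sqrt_le_sqrt sum_le
    _ = N * c * ‖x‖ := Real.sqrt_sq (by positivity)

lemma aux_norm_allOnes {N : ℕ} (hN : 0 < N) : ‖allOnes N‖ = N := by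
  apply le_antisymm
  · simpa using aux_norm_le_card_mul_of_entries (allOnes N) 1 zero_le_one (fun k l => by
      simp [allOnes])
  · set u : EuclideanSpace ℂ (Fin N) := (WithLp.equiv 2 (Fin N → ℂ)).symm (fun _ => 1) with hu
    have hmv : allOnes N *ᵥ (fun _ => (1:ℂ)) = fun _ => (N : ℂ) := by
      funext k
      simp [allOnes, Matrix.mulVec, dotProduct]
    have hnu : ‖u‖ = Real.sqrt N := by
      rw [EuclideanSpace.norm_eq]
      simp [u]
    have h := (allOnes N).l2_opNorm_mulVec u
    have e : (EuclideanSpace.equiv (Fin N) ℂ).symm (allOnes N *ᵥ fun i => u i)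
        = (WithLp.equiv 2 (Fin N → ℂ)).symm (fun _ => (N:ℂ)) := by
      rw [show (fun i => u i) = (fun _ => (1:ℂ)) from rfl, hmv]
      rfl
    rw [show ((EuclideanSpace.equiv (Fin N) ℂ).symm <| allOnes N *ᵥ u)
      = (WithLp.equiv 2 (Fin N → ℂ)).symm (fun _ => (N:ℂ)) from e] at h
    have hn2 : ‖(WithLp.equiv 2 (Fin N → ℂ)).symm (fun _ => (N:ℂ))‖ = N * Real.sqrt N := by
      rw [EuclideanSpace.norm_eq]
      have : ∀ i : Fin N, ‖((WithLp.equiv 2 (Fin N → ℂ)).symm (fun _ => (N:ℂ))) i‖ ^ 2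
          = (N:ℝ)^2 := by intro i; simp
      rw [Finset.sum_congr rfl (fun i _ => this i)]
      rw [Finset.sum_const, Finset.card_univ, Fintype.card_fin, nsmul_eq_mul]
      rw [show (N:ℝ) * (N:ℝ)^2 = ((N:ℝ) * Real.sqrt N)^2 by
        rw [mul_pow, Real.sq_sqrt (Nat.cast_nonneg N)]; ring]
      exact Real.sqrt_sq (by positivity)
    rw [hn2, hnu] at h
    have hs : 0 < Real.sqrt N := Real.sqrt_pos.mpr (by exact_mod_cast hN)
    calc (N:ℝ) = (N * Real.sqrt N) / Real.sqrt N := by field_simp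
    _ ≤ (‖allOnes N‖ * Real.sqrt N) / Real.sqrt N := by gcongr
    _ = ‖allOnes N‖ := by field_simp

lemma aux_evalsDesc_zero_max {N : ℕ} (hN : 0 < N) (B : Matrix (Fin N) (Fin N) ℂ) (i : Fin N) :
    (Matrix.isHermitian_mul_conjTranspose_self B).eigenvalues i ≤ evalsDesc B ⟨0, hN⟩ := by
  set lam := (Matrix.isHermitian_mul_conjTranspose_self B).eigenvalues
  set σ := Tuple.sort (fun i => -lam i)
  have hmono := Tuple.monotone_sort (fun i => -lam i)
  have h0 : (⟨0, hN⟩ : Fin N) ≤ σ.symm i := by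
    rw [Fin.le_def]; exact Nat.zero_le _
  have := hmono h0
  simp only [Function.comp_apply, Equiv.apply_symm_apply] at this
  have : -lam (σ ⟨0, hN⟩) ≤ -lam i := by simpa [σ] using this
  simpa [evalsDesc, lam, σ] using neg_le_neg_iff.mp this

lemma aux_norm_eq_evalsDesc_max {N : ℕ} (hN : 0 < N) (B : Matrix (Fin N) (Fin N) ℂ) :
    ‖B * Bᴴ‖ = evalsDesc B ⟨0, hN⟩ := by
  set H := B * Bᴴ with hHdef
  have hH : H.IsHermitian := Matrix.isHermitian_mul_conjTranspose_self B
  set lam := hH.eigenvalues with hlam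
  set b := hH.eigenvectorBasis with hb
  set μ := evalsDesc B ⟨0, hN⟩ with hμ
  have hmax : ∀ i, lam i ≤ μ := fun i => aux_evalsDesc_zero_max hN B i
  have hnn : ∀ i, 0 ≤ lam i := Matrix.eigenvalues_self_mul_conjTranspose_nonneg B
  have hμmem : ∃ j, μ = lam j := ⟨_, rfl⟩
  obtain ⟨j0, hj0⟩ := hμmem
  have hμnn : 0 ≤ μ := hj0 ▸ hnn j0
  have hT : ∀ i, Matrix.toEuclideanLin H (b i) = lam i • b i := by
    intro i
    apply (WithLp.equiv 2 (Fin N → ℂ)).injective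
    have := hH.mulVec_eigenvectorBasis i
    simpa [Matrix.ofLp_toEuclideanLin_apply] using this
  apply le_antisymm
  · rw [Matrix.l2_opNorm_def]
    apply ContinuousLinearMap.opNorm_le_bound _ hμnn
    intro x
    have hSym : (Matrix.toEuclideanLin H).IsSymmetric :=
      Matrix.isHermitian_iff_isSymmetric.mp hH
    have happ : ((Matrix.toEuclideanLin.trans LinearMap.toContinuousLinearMap) H) x
        = Matrix.toEuclideanLin H x := rfl
    rw [happ]
    set y := Matrix.toEuclideanLin H x with hy
    have hinner : ∀ i, (inner ℂ (b i) y : ℂ) = (lam i : ℂ) * inner ℂ (b i) x := by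
      intro i
      rw [hy, ← hSym (b i) x, hT i, RCLike.real_smul_eq_coe_smul (K := ℂ), inner_smul_left]
      simp [Complex.conj_ofReal]
    have hnormy : ‖y‖ ^ 2 = ∑ i, ‖(inner ℂ (b i) y : ℂ)‖ ^ 2 := by
      rw [← b.repr.norm_map y, EuclideanSpace.norm_eq,
        Real.sq_sqrt (by positivity)]
      congr 1; ext i
      rw [b.repr_apply_apply]
    have hnormx : ‖x‖ ^ 2 = ∑ i, ‖(inner ℂ (b i) x : ℂ)‖ ^ 2 := by
      rw [← b.repr.norm_map x, EuclideanSpace.norm_eq,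
        Real.sq_sqrt (by positivity)]
      congr 1; ext i
      rw [b.repr_apply_apply]
    have hle : ‖y‖ ^ 2 ≤ (μ * ‖x‖) ^ 2 := by
      rw [hnormy]
      calc ∑ i, ‖(inner ℂ (b i) y : ℂ)‖ ^ 2
          ≤ ∑ i, μ ^ 2 * ‖(inner ℂ (b i) x : ℂ)‖ ^ 2 := by
            apply Finset.sum_le_sum
            intro i _
            rw [hinner i, norm_mul, mul_pow]
            apply mul_le_mul_of_nonneg_right _ (by positivity)
            rw [Complex.norm_real, Real.norm_eq_abs, abs_of_nonneg (hnn i)]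
            exact pow_le_pow_left₀ (hnn i) (hmax i) 2
        _ = μ ^ 2 * ∑ i, ‖(inner ℂ (b i) x : ℂ)‖ ^ 2 := by rw [Finset.mul_sum]
        _ = (μ * ‖x‖) ^ 2 := by rw [← hnormx]; ring
    exact (pow_le_pow_iff_left₀ (norm_nonneg y) (by positivity) two_ne_zero).mp hle
  · have h := H.l2_opNorm_mulVec (b j0)
    have hb1 : ‖b j0‖ = 1 := b.orthonormal.1 j0
    have he : (EuclideanSpace.equiv (Fin N) ℂ).symm (H *ᵥ fun i => (b j0) i)
        = lam j0 • (b j0) := by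
      apply (WithLp.equiv 2 (Fin N → ℂ)).injective
      simpa using hH.mulVec_eigenvectorBasis j0
    rw [show ((EuclideanSpace.equiv (Fin N) ℂ).symm <| H *ᵥ (b j0))
      = lam j0 • (b j0) from he] at h
    rw [norm_smul, hb1, mul_one, mul_one, Real.norm_eq_abs, abs_of_nonneg (hnn j0)] at h
    rw [hj0]; exact h

lemma aux_svalsDesc_zero_eq_norm {N : ℕ} (hN : 0 < N) (B : Matrix (Fin N) (Fin N) ℂ) :
    svalsDesc B ⟨0, hN⟩ = ‖B‖ := by
  have h4 : ‖B * Bᴴ‖ = ‖B‖ * ‖B‖ := by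
    calc ‖B * Bᴴ‖ = ‖(Bᴴ)ᴴ * Bᴴ‖ := by rw [Matrix.conjTranspose_conjTranspose]
      _ = ‖Bᴴ‖ * ‖Bᴴ‖ := Matrix.l2_opNorm_conjTranspose_mul_self Bᴴ
      _ = ‖B‖ * ‖B‖ := by rw [Matrix.l2_opNorm_conjTranspose]
  have := aux_norm_eq_evalsDesc_max hN B
  rw [svalsDesc, ← this, h4, Real.sqrt_mul_self (norm_nonneg B)]

lemma aux_tail_exp_le (M : ℝ) (hM : 0 ≤ M) :
    ∑' n : ℕ, M ^ (n + 2) / (n + 2)! ≤ Real.exp M := by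
  have hs : Summable (fun n : ℕ => M ^ n / n !) := NormedSpace.expSeries_div_summable M
  have hexp : Real.exp M = ∑' n : ℕ, M ^ n / n ! := by
    rw [Real.exp_eq_exp_ℝ, NormedSpace.exp_eq_tsum_div]
  have := Summable.sum_add_tsum_nat_add 2 hs
  rw [← hexp] at this
  have h2 : ∑ i ∈ Finset.range 2, M ^ i / i ! = 1 + M := by
    simp [Finset.sum_range_succ]
  rw [h2] at this
  nlinarith [this]

lemma aux_exp_remainder_bound (z : ℂ) (γ : ℝ) (h0 : 0 ≤ γ) (h1 : γ ≤ 1) (M : ℝ)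
    (hzM : ‖z‖ ≤ M) :
    ‖Complex.exp ((γ : ℂ) * z) - 1 - (γ : ℂ) * z‖ ≤ γ ^ 2 * Real.exp M := by
  set w : ℂ := (γ : ℂ) * z with hw
  have hM : 0 ≤ M := le_trans (norm_nonneg z) hzM
  have hs : Summable (fun n : ℕ => w ^ n / n !) := NormedSpace.expSeries_div_summable w
  have hexp : Complex.exp w = ∑' n : ℕ, w ^ n / n ! := by
    rw [Complex.exp_eq_exp_ℂ, NormedSpace.exp_eq_tsum_div]
  have htail := Summable.sum_add_tsum_nat_add 2 hs
  have h2 : ∑ i ∈ Finset.range 2, w ^ i / i ! = 1 + w := by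
    simp [Finset.sum_range_succ]
  have hrem : Complex.exp w - 1 - w = ∑' n : ℕ, w ^ (n + 2) / (n + 2)! := by
    rw [hexp, ← htail, h2]; ring
  rw [hrem]
  have hsn : Summable (fun n : ℕ => ‖w‖ ^ (n + 2) / (n + 2)!) :=
    (NormedSpace.expSeries_div_summable ‖w‖).comp_injective (add_left_injective 2)
  have hnorm_eq : ∀ n : ℕ, ‖w ^ (n + 2) / ((n + 2)! : ℂ)‖ = ‖w‖ ^ (n + 2) / (n + 2)! := by
    intro n
    rw [norm_div, norm_pow]
    congr 1
    simp [Complex.norm_natCast]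
  have h1' : ‖∑' n : ℕ, w ^ (n + 2) / (n + 2)!‖ ≤ ∑' n : ℕ, ‖w‖ ^ (n + 2) / (n + 2)! := by
    calc ‖∑' n : ℕ, w ^ (n + 2) / (n + 2)!‖ ≤ ∑' n : ℕ, ‖w ^ (n + 2) / ((n + 2)! : ℂ)‖ :=
          norm_tsum_le_tsum_norm (by simpa only [hnorm_eq] using hsn)
      _ = _ := by exact tsum_congr hnorm_eq
  have hwle : ‖w‖ = γ * ‖z‖ := by
    rw [hw, norm_mul, Complex.norm_real, Real.norm_eq_abs, abs_of_nonneg h0]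
  have hterm : ∀ n : ℕ, ‖w‖ ^ (n + 2) / (n + 2)! ≤ γ ^ 2 * (M ^ (n + 2) / (n + 2)!) := by
    intro n
    rw [hwle, mul_pow]
    rw [div_le_iff₀ (by positivity : (0:ℝ) < (n + 2)!)]
    have hγpow : γ ^ (n + 2) ≤ γ ^ 2 := pow_le_pow_of_le_one h0 h1 (by omega)
    have hzpow : ‖z‖ ^ (n + 2) ≤ M ^ (n + 2) := pow_le_pow_left₀ (norm_nonneg z) hzM _
    calc γ ^ (n + 2) * ‖z‖ ^ (n + 2) ≤ γ ^ 2 * M ^ (n + 2) := by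
          apply mul_le_mul hγpow hzpow (by positivity) (by positivity)
      _ = γ ^ 2 * (M ^ (n + 2) / (n + 2)!) * (n + 2)! := by
          field_simp
  have hsM : Summable (fun n : ℕ => γ ^ 2 * (M ^ (n + 2) / (n + 2)!)) :=
    ((NormedSpace.expSeries_div_summable M).comp_injective (add_left_injective 2)).mul_left _
  have h2' : ∑' n : ℕ, ‖w‖ ^ (n + 2) / (n + 2)! ≤ ∑' n : ℕ, γ ^ 2 * (M ^ (n + 2) / (n + 2)!) :=
    Summable.tsum_le_tsum hterm hsn hsM
  have h3' : ∑' n : ℕ, γ ^ 2 * (M ^ (n + 2) / (n + 2)!) ≤ γ ^ 2 * Real.exp M := by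
    rw [tsum_mul_left]
    exact mul_le_mul_of_nonneg_left (aux_tail_exp_le M hM) (by positivity)
  linarith

/-- for `A ∈ M_N(ℂ)` and `0 < γ < 1`, with `X = exp_∘(iγA)`, the largest
singular value of `X/γ` satisfies `|σ_1(X/γ)/(N/γ) − 1| ≤ γ(γ exp(‖A‖) + ‖A‖)`. -/
theorem largest_sval_entrywiseExp {N : ℕ} (hN : 0 < N)
    (A : Matrix (Fin N) (Fin N) ℂ) (γ : ℝ) (hγ0 : 0 < γ) (hγ1 : γ < 1) :
    |svalsDesc (((γ : ℂ))⁻¹ • entrywiseExp ((Complex.I * (γ : ℂ)) • A)) ⟨0, hN⟩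
        / ((N : ℝ) / γ) - 1|
      ≤ γ * (γ * Real.exp (opNorm A) + opNorm A) := by
  set X := entrywiseExp ((Complex.I * (γ : ℂ)) • A) with hX
  set M : ℝ := ‖A‖ with hM
  have hMnn : 0 ≤ M := norm_nonneg A
  have hopA : opNorm A = M := rfl
  set L : Matrix (Fin N) (Fin N) ℂ := (Complex.I * (γ : ℂ)) • A with hL
  set E : Matrix (Fin N) (Fin N) ℂ := X - allOnes N - L with hE
  -- entrywise bound on E
  have hEentry : ∀ k l, ‖E k l‖ ≤ γ ^ 2 * Real.exp M := by
    intro k l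
    have hz : ‖Complex.I * A k l‖ ≤ M := by
      rw [norm_mul, Complex.norm_I, one_mul]
      exact aux_entry_le_norm A k l
    have hb := aux_exp_remainder_bound (Complex.I * A k l) γ hγ0.le hγ1.le M hz
    have he : E k l = Complex.exp ((γ : ℂ) * (Complex.I * A k l)) - 1
        - (γ : ℂ) * (Complex.I * A k l) := by
      show X k l - allOnes N k l - L k l = _
      have h1 : X k l = Complex.exp ((Complex.I * (γ : ℂ)) * A k l) := rfl
      have h2 : allOnes N k l = 1 := rfl
      have h3 : L k l = (Complex.I * (γ : ℂ)) * A k l := rfl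
      rw [h1, h2, h3, show (Complex.I * (γ : ℂ)) * A k l
        = (γ : ℂ) * (Complex.I * A k l) by ring]
    rw [he]
    exact hb
  have hEnorm : ‖E‖ ≤ N * (γ ^ 2 * Real.exp M) :=
    aux_norm_le_card_mul_of_entries E _ (by positivity) hEentry
  have hLnorm : ‖L‖ = γ * M := by
    rw [hL, norm_smul, norm_mul, Complex.norm_I, one_mul, Complex.norm_real,
      Real.norm_eq_abs, abs_of_pos hγ0]
  have hXJ : ‖X - allOnes N‖ ≤ N * (γ ^ 2 * Real.exp M) + γ * M := by
    have hsplit : X - allOnes N = E + L := by rw [hE]; abel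
    rw [hsplit]
    calc ‖E + L‖ ≤ ‖E‖ + ‖L‖ := norm_add_le E L
      _ ≤ N * (γ ^ 2 * Real.exp M) + γ * M := by rw [hLnorm]; linarith
  have habs : |‖X‖ - (N : ℝ)| ≤ N * (γ ^ 2 * Real.exp M) + γ * M := by
    have := abs_norm_sub_norm_le X (allOnes N)
    rw [aux_norm_allOnes hN] at this
    exact this.trans hXJ
  -- rewrite the LHS
  have hsval : svalsDesc (((γ : ℂ))⁻¹ • X) ⟨0, hN⟩ = γ⁻¹ * ‖X‖ := by
    rw [aux_svalsDesc_zero_eq_norm hN, norm_smul, norm_inv, Complex.norm_real,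
      Real.norm_eq_abs, abs_of_pos hγ0]
  have hNpos : (0:ℝ) < N := by exact_mod_cast hN
  have hdiv : svalsDesc (((γ : ℂ))⁻¹ • X) ⟨0, hN⟩ / ((N : ℝ) / γ) - 1
      = (‖X‖ - N) / N := by
    rw [hsval]
    field_simp
  rw [hdiv, hopA, abs_div, abs_of_pos hNpos]
  rw [div_le_iff₀ hNpos]
  have hN1 : (1:ℝ) ≤ N := by exact_mod_cast hN
  calc |‖X‖ - (N : ℝ)| ≤ N * (γ ^ 2 * Real.exp M) + γ * M := habs
    _ ≤ N * (γ ^ 2 * Real.exp M) + N * (γ * M) := by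
        nlinarith [mul_nonneg hγ0.le hMnn]
    _ = γ * (γ * Real.exp M + M) * N := by ring
end
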